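/- Let m be odd, n = 2m, and h ∈ ℂ(x) a nonzero rational function. Define the birational map α(x,y) = (e^{2πi/n}·x, (h(x^m)y − h(x^m)h(−x^m))/(y + h(x^m))). Then α²(x,y) = (e^{2πi/m}·x, −h(x^m)h(−x^m)/y), and α^n(x,y) = (x, −h(x^m)h(−x^m)/y). -/

import Mathlib

open Function

lemma aux7 (H : ℂ → ℂ) (ζ : ℂ) (m : ℕ) (α : ℂ × ℂ → ℂ × ℂ)
    (hα : ∀ q : ℂ × ℂ, α q =
      (ζ * q.1, (H (q.1 ^ m) * q.2 - H (q.1 ^ m) * H (-(q.1 ^ m))) / (q.2 + H (q.1 ^ m))))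
    (hζ : ζ ^ m = -1)
    (p : ℂ × ℂ) (hy : p.2 ≠ 0) (hA : H (p.1 ^ m) ≠ 0) (hB : H (-(p.1 ^ m)) ≠ 0)
    (h1 : p.2 + H (p.1 ^ m) ≠ 0)
    (h2 : (α p).2 + H ((α p).1 ^ m) ≠ 0) :
    α (α p) = (ζ ^ 2 * p.1, -(H (p.1 ^ m) * H (-(p.1 ^ m))) / p.2) := by
  have hxm : (ζ * p.1) ^ m = -(p.1 ^ m) := by rw [mul_pow, hζ]; ring
  set A := H (p.1 ^ m) with hAdef
  set B := H (-(p.1 ^ m)) with hBdef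
  rw [hα p] at h2 ⊢
  rw [hα]
  simp only [hxm, neg_neg] at h2 ⊢
  set y := p.2 with hydef
  have e1 : (A * y - A * B) / (y + A) + B = (A + B) * y / (y + A) := by
    field_simp; ring
  rw [e1] at h2
  refine Prod.ext ?_ ?_
  · simp; ring
  · simp only
    simp only [← hAdef, ← hBdef]
    rw [div_eq_div_iff (by rw [e1]; exact h2) hy]
    field_simp
    ring

theorem stmt7 (m : ℕ) (hm : Odd m) (hm0 : 0 < m) (h : RatFunc ℂ) (hh : h ≠ 0) :
    let H : ℂ → ℂ := fun t => RatFunc.eval (RingHom.id ℂ) t h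
    let ζ : ℂ := Complex.exp (2 * (Real.pi : ℂ) * Complex.I / (2 * m))
    let α : ℂ × ℂ → ℂ × ℂ := fun p =>
      (ζ * p.1,
        (H (p.1 ^ m) * p.2 - H (p.1 ^ m) * H (-(p.1 ^ m))) / (p.2 + H (p.1 ^ m)))
    ∀ p : ℂ × ℂ, p.2 ≠ 0 → H (p.1 ^ m) ≠ 0 → H (-(p.1 ^ m)) ≠ 0 →
      (∀ k : ℕ, (α^[k] p).2 + H ((α^[k] p).1 ^ m) ≠ 0) →
      α (α p) = (Complex.exp (2 * (Real.pi : ℂ) * Complex.I / (m : ℂ)) * p.1,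
          -(H (p.1 ^ m) * H (-(p.1 ^ m))) / p.2) ∧
      α^[2 * m] p = (p.1, -(H (p.1 ^ m) * H (-(p.1 ^ m))) / p.2) := by
  intro H ζ α p hy hA hB hden
  have hα : ∀ q : ℂ × ℂ, α q =
      (ζ * q.1, (H (q.1 ^ m) * q.2 - H (q.1 ^ m) * H (-(q.1 ^ m))) / (q.2 + H (q.1 ^ m))) :=
    fun q => rfl
  have hm' : (m : ℂ) ≠ 0 := Nat.cast_ne_zero.mpr hm0.ne'
  have hζm : ζ ^ m = -1 := by
    show Complex.exp (2 * (Real.pi : ℂ) * Complex.I / (2 * m)) ^ m = -1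
    rw [← Complex.exp_nat_mul]
    rw [show (m : ℂ) * (2 * (Real.pi : ℂ) * Complex.I / (2 * m)) = Real.pi * Complex.I by
      field_simp]
    exact Complex.exp_pi_mul_I
  have hζ2m : ζ ^ (2 * m) = 1 := by
    rw [mul_comm, pow_mul, hζm]; norm_num
  -- invariance of x^m under multiplication by ζ^(2k)
  have hx : ∀ k : ℕ, (ζ ^ (2 * k) * p.1) ^ m = p.1 ^ m := by
    intro k
    rw [mul_pow, ← pow_mul, show 2 * k * m = (2 * m) * k by ring, pow_mul, hζ2m, one_pow, one_mul]
  set A := H (p.1 ^ m) with hAdef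
  set B := H (-(p.1 ^ m)) with hBdef
  have key : ∀ k : ℕ, α^[2 * k] p =
      (ζ ^ (2 * k) * p.1, if Even k then p.2 else -(A * B) / p.2) := by
    intro k
    induction k with
    | zero => simp
    | succ k ih =>
      have hq2 : (if Even k then p.2 else -(A * B) / p.2) ≠ 0 := by
        split
        · exact hy
        · exact div_ne_zero (neg_ne_zero.mpr (mul_ne_zero hA hB)) hy
      set q : ℂ × ℂ := (ζ ^ (2 * k) * p.1, if Even k then p.2 else -(A * B) / p.2) with hqdef
      have hq1 : q.1 ^ m = p.1 ^ m := hx k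
      have step : α (α q) = (ζ ^ 2 * q.1, -(H (q.1 ^ m) * H (-(q.1 ^ m))) / q.2) := by
        apply aux7 H ζ m α hα hζm q hq2
        · rw [hq1]; exact hA
        · rw [hq1]; exact hB
        · have := hden (2 * k); rw [ih] at this; exact this
        · have := hden (2 * k + 1)
          rw [Function.iterate_succ_apply', ih] at this
          exact this
      have h2k : α^[2 * (k + 1)] p = α (α (α^[2 * k] p)) := by
        rw [show 2 * (k + 1) = (2 * k + 1) + 1 by ring,
          Function.iterate_succ_apply', Function.iterate_succ_apply']
      rw [h2k, ih, step, hq1]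
      have hAB0 : -(A * B) ≠ 0 := neg_ne_zero.mpr (mul_ne_zero hA hB)
      refine Prod.ext ?_ ?_
      · show ζ ^ 2 * q.1 = ζ ^ (2 * (k + 1)) * p.1
        rw [hqdef]
        show ζ ^ 2 * (ζ ^ (2 * k) * p.1) = _
        rw [show 2 * (k + 1) = 2 + 2 * k by ring, pow_add]; ring
      · show -(A * B) / q.2 = if Even (k + 1) then p.2 else -(A * B) / p.2
        rw [hqdef]
        by_cases hk : Even k
        · simp [Nat.even_add_one, hk]
        · simp only [Nat.even_add_one, hk, not_false_iff, if_true, if_false]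
          field_simp
  constructor
  · have step := aux7 H ζ m α hα hζm p hy hA hB
      (by have := hden 0; simpa using this)
      (by have := hden 1; simpa using this)
    rw [step]
    have hζ2 : ζ ^ 2 = Complex.exp (2 * (Real.pi : ℂ) * Complex.I / (m : ℂ)) := by
      show Complex.exp (2 * (Real.pi : ℂ) * Complex.I / (2 * m)) ^ 2 = _
      rw [sq, ← Complex.exp_add]
      congr 1
      field_simp
      ring
    rw [hζ2]
  · have := key m
    rw [this, hζ2m, one_mul, if_neg (Nat.not_even_iff_odd.mpr hm)]
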